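/- Let X be a finite data domain, R a finite range, and S a score function on datasets D ∈ X^n and r ∈ R with sensitivity Δ_S = max over neighboring datasets D, D′ and r ∈ R of |S(D,r) − S(D′,r)| > 0. For ρ > 0, the exponential mechanism M_E(D, S, R, ρ), which outputs r ∈ R with probability proportional to exp(ρ·S(D,r)/(2Δ_S)), satisfies (ρ²/2)-zCDP: for all neighboring datasets D, D′ and all α > 1, D_α(M_E(D) ‖ M_E(D′)) ≤ (ρ²/2)·α. -/

import Mathlib

open Real Set

-- sinh x ≤ x * cosh x for 0 ≤ x
lemma aux_sinh_le (x : ℝ) (hx : 0 ≤ x) : Real.sinh x ≤ x * Real.cosh x := by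
  have hmono : MonotoneOn (fun y : ℝ => y * Real.cosh y - Real.sinh y) (Ici 0) := by
    have hderiv : ∀ y : ℝ, HasDerivAt (fun y : ℝ => y * Real.cosh y - Real.sinh y)
        (y * Real.sinh y) y := by
      intro y
      have h := ((hasDerivAt_id y).mul (Real.hasDerivAt_cosh y)).sub (Real.hasDerivAt_sinh y)
      refine h.congr_deriv ?_
      simp [mul_comm]
    apply monotoneOn_of_deriv_nonneg (convex_Ici 0)
    · exact (Continuous.continuousOn (by continuity))
    · intro y hy
      exact (hderiv y).differentiableAt.differentiableWithinAt
    · intro y hy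
      rw [interior_Ici, mem_Ioi] at hy
      rw [(hderiv y).deriv]
      exact mul_nonneg hy.le (Real.sinh_nonneg_iff.2 hy.le)
  have := hmono (self_mem_Ici) (mem_Ici.2 hx) hx
  simpa using this

-- cosh c ≤ cosh p * exp ((c^2 - p^2)/2) for 0 ≤ p ≤ c
lemma aux_cosh_ratio (p c : ℝ) (hp : 0 ≤ p) (hpc : p ≤ c) :
    Real.cosh c ≤ Real.cosh p * Real.exp ((c ^ 2 - p ^ 2) / 2) := by
  have hmono : MonotoneOn (fun y : ℝ => y ^ 2 / 2 - Real.log (Real.cosh y)) (Ici 0) := by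
    have hderiv : ∀ y : ℝ, HasDerivAt (fun y : ℝ => y ^ 2 / 2 - Real.log (Real.cosh y))
        (y - Real.sinh y / Real.cosh y) y := by
      intro y
      have h1 : HasDerivAt (fun y : ℝ => y ^ 2 / 2) y y := by
        have := (hasDerivAt_pow 2 y).div_const 2
        refine this.congr_deriv ?_
        simp
      have h2 : HasDerivAt (fun y : ℝ => Real.log (Real.cosh y))
          (Real.sinh y / Real.cosh y) y :=
        (Real.hasDerivAt_cosh y).log (Real.cosh_pos y).ne'
      exact h1.sub h2
    apply monotoneOn_of_deriv_nonneg (convex_Ici 0)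
    · apply Continuous.continuousOn
      exact (by continuity : Continuous fun y : ℝ => y ^ 2 / 2).sub
        (Real.continuous_cosh.log (fun y => (Real.cosh_pos y).ne'))
    · intro y _
      exact (hderiv y).differentiableAt.differentiableWithinAt
    · intro y hy
      rw [interior_Ici, mem_Ioi] at hy
      rw [(hderiv y).deriv, sub_nonneg, div_le_iff₀ (Real.cosh_pos y)]
      exact aux_sinh_le y hy.le
  have h := hmono (mem_Ici.2 hp) (mem_Ici.2 (hp.trans hpc)) hpc
  simp only at h
  have hlog : Real.log (Real.cosh c) ≤ Real.log (Real.cosh p) + (c ^ 2 - p ^ 2) / 2 := by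
    linarith
  calc Real.cosh c = Real.exp (Real.log (Real.cosh c)) := (Real.exp_log (Real.cosh_pos _)).symm
    _ ≤ Real.exp (Real.log (Real.cosh p) + (c ^ 2 - p ^ 2) / 2) := Real.exp_le_exp.2 hlog
    _ = Real.cosh p * Real.exp ((c ^ 2 - p ^ 2) / 2) := by
        rw [Real.exp_add, Real.exp_log (Real.cosh_pos _)]

lemma aux_ratio (ρ α : ℝ) (hρ : 0 < ρ) (hα : 1 < α) :
    ((Real.exp ρ - 1) * Real.exp (-(ρ * α)) + (1 - Real.exp (-ρ)) * Real.exp (ρ * α))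
      / (Real.exp ρ - Real.exp (-ρ)) ≤ Real.exp ((α - 1) * (ρ ^ 2 / 2 * α)) := by
  set p := ρ / 2 with hp
  set c := ρ * α - ρ / 2 with hc
  have hp0 : 0 < p := by rw [hp]; linarith
  have hpc : p ≤ c := by rw [hp, hc]; nlinarith
  have key := aux_cosh_ratio p c hp0.le hpc
  rw [Real.cosh_eq, Real.cosh_eq] at key
  have hE : (c ^ 2 - p ^ 2) / 2 = (α - 1) * (ρ ^ 2 / 2 * α) := by rw [hc, hp]; ring
  have hN : (Real.exp ρ - 1) * Real.exp (-(ρ * α)) + (1 - Real.exp (-ρ)) * Real.exp (ρ * α)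
      = (Real.exp c + Real.exp (-c)) * (Real.exp p - Real.exp (-p)) := by
    rw [show ρ * α = c + p by rw [hc, hp]; ring, show ρ = p + p by rw [hp]; ring]
    simp only [Real.exp_add, Real.exp_neg, neg_add]
    have h1 := (Real.exp_pos p).ne'
    have h2 := (Real.exp_pos c).ne'
    field_simp
    ring
  have hD : Real.exp ρ - Real.exp (-ρ)
      = (Real.exp p + Real.exp (-p)) * (Real.exp p - Real.exp (-p)) := by
    rw [show ρ = p + p by rw [hp]; ring]
    simp only [Real.exp_add, Real.exp_neg, neg_add]
    have h1 := (Real.exp_pos p).ne'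
    field_simp
    ring
  have hDpos : 0 < Real.exp ρ - Real.exp (-ρ) := by
    have := Real.exp_lt_exp.2 (show -ρ < ρ by linarith)
    linarith
  have hPpos : 0 < Real.exp p - Real.exp (-p) := by
    have := Real.exp_lt_exp.2 (show -p < p by linarith)
    linarith
  rw [div_le_iff₀ hDpos, hN, hD, ← hE]
  calc (Real.exp c + Real.exp (-c)) * (Real.exp p - Real.exp (-p))
      ≤ ((Real.exp p + Real.exp (-p)) * Real.exp ((c ^ 2 - p ^ 2) / 2))
          * (Real.exp p - Real.exp (-p)) := by
        apply mul_le_mul_of_nonneg_right _ hPpos.le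
        linarith
    _ = Real.exp ((c ^ 2 - p ^ 2) / 2)
          * ((Real.exp p + Real.exp (-p)) * (Real.exp p - Real.exp (-p))) := by ring

lemma aux_term (Pr Qr m M α : ℝ) (hQ : 0 < Qr) (hm : 0 < m) (hmM : m < M)
    (h1 : m * Qr ≤ Pr) (h2 : Pr ≤ M * Qr) (hα : 1 ≤ α) :
    Pr ^ α * Qr ^ (1 - α) ≤ ((M * Qr - Pr) * m ^ α + (Pr - m * Qr) * M ^ α) / (M - m) := by
  have hP : 0 < Pr := lt_of_lt_of_le (by positivity) h1
  have hMm : 0 < M - m := by linarith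
  set x := Pr / Qr with hx
  have hxval : Qr * x = Pr := by rw [hx]; field_simp
  have hx1 : m ≤ x := (le_div_iff₀ hQ).2 (by linarith)
  have hx2 : x ≤ M := (div_le_iff₀ hQ).2 (by linarith)
  have hconv := convexOn_rpow hα
  have ha : (0:ℝ) ≤ (M - x) / (M - m) := by
    apply div_nonneg _ hMm.le; linarith
  have hb : (0:ℝ) ≤ (x - m) / (M - m) := by
    apply div_nonneg _ hMm.le; linarith
  have hab : (M - x) / (M - m) + (x - m) / (M - m) = 1 := by field_simp; ring
  have hcomb := hconv.2 (Set.mem_Ici.2 hm.le) (Set.mem_Ici.2 (hm.trans hmM).le) ha hb hab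
  simp only [smul_eq_mul] at hcomb
  rw [show (M - x) / (M - m) * m + (x - m) / (M - m) * M = x by
    field_simp; ring] at hcomb
  have heq : Pr ^ α * Qr ^ (1 - α) = Qr * x ^ α := by
    rw [hx, Real.div_rpow hP.le hQ.le, Real.rpow_sub hQ, Real.rpow_one]
    have := (Real.rpow_pos_of_pos hQ α).ne'
    field_simp
  rw [heq]
  calc Qr * x ^ α ≤ Qr * ((M - x) / (M - m) * m ^ α + (x - m) / (M - m) * M ^ α) :=
        mul_le_mul_of_nonneg_left hcomb hQ.le
    _ = ((M * Qr - Pr) * m ^ α + (Pr - m * Qr) * M ^ α) / (M - m) := by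
        rw [← hxval]; field_simp


/-- (The exponential mechanism satisfies `(ρ²/2)`-zCDP.)
For a score function `S` of sensitivity `Δ_S > 0`, the exponential mechanism
`M_E(D, S, R, ρ)`, which outputs `r ∈ R` with probability proportional to
`exp(ρ·S(D,r)/(2Δ_S))`, satisfies `(ρ²/2)`-zCDP. -/
theorem exponential_mechanism_zCDP
    {X R : Type*} [Fintype X] [Fintype R] [Nonempty R]
    (n : ℕ) (hn : 1 ≤ n) (ρ : ℝ) (hρ : 0 < ρ)
    (S : (Fin n → X) → R → ℝ) (Δ : ℝ) (hΔ : 0 < Δ)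
    -- `Δ` is the sensitivity of `S` over neighboring datasets
    (hsens : ∀ D D' : Fin n → X, (∃ i, ∀ j, j ≠ i → D j = D' j) →
      ∀ r, |S D r - S D' r| ≤ Δ)
    -- the exponential mechanism
    (EM : (Fin n → X) → R → ℝ)
    (hEM : ∀ D r, EM D r =
      Real.exp (ρ * S D r / (2 * Δ)) / ∑ r', Real.exp (ρ * S D r' / (2 * Δ))) :
    -- `(ρ²/2)`-zCDP
    ∀ D D' : Fin n → X, (∃ i, ∀ j, j ≠ i → D j = D' j) →
      ∀ α : ℝ, 1 < α →
        (α - 1)⁻¹ * Real.log (∑ r, EM D r ^ α * EM D' r ^ (1 - α)) ≤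
          ρ ^ 2 / 2 * α := by
  intro D D' hnb α hα
  have hs1 := hsens D D' hnb
  -- the exponent gap is at most ρ/2
  have habs : ∀ r, |ρ * S D r / (2 * Δ) - ρ * S D' r / (2 * Δ)| ≤ ρ / 2 := by
    intro r
    have h := hs1 r
    have heq : ρ * S D r / (2 * Δ) - ρ * S D' r / (2 * Δ)
        = ρ * (S D r - S D' r) / (2 * Δ) := by ring
    rw [heq, abs_div, abs_mul, abs_of_pos hρ, abs_of_pos (by linarith : (0:ℝ) < 2 * Δ),
      div_le_iff₀ (by linarith : (0:ℝ) < 2 * Δ)]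
    calc ρ * |S D r - S D' r| ≤ ρ * Δ := mul_le_mul_of_nonneg_left h hρ.le
      _ = ρ / 2 * (2 * Δ) := by ring
  set Z := ∑ r', Real.exp (ρ * S D r' / (2 * Δ)) with hZdef
  set Z' := ∑ r', Real.exp (ρ * S D' r' / (2 * Δ)) with hZ'def
  have hZpos : 0 < Z := by
    rw [hZdef]; exact Finset.sum_pos (fun r _ => Real.exp_pos _) Finset.univ_nonempty
  have hZ'pos : 0 < Z' := by
    rw [hZ'def]; exact Finset.sum_pos (fun r _ => Real.exp_pos _) Finset.univ_nonempty
  have hPdef : ∀ r, EM D r = Real.exp (ρ * S D r / (2 * Δ)) / Z := by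
    intro r; rw [hEM, hZdef]
  have hQdef : ∀ r, EM D' r = Real.exp (ρ * S D' r / (2 * Δ)) / Z' := by
    intro r; rw [hEM, hZ'def]
  have hPpos : ∀ r, 0 < EM D r := fun r => (hPdef r) ▸ div_pos (Real.exp_pos _) hZpos
  have hQpos : ∀ r, 0 < EM D' r := fun r => (hQdef r) ▸ div_pos (Real.exp_pos _) hZ'pos
  have hP1 : ∑ r, EM D r = 1 := by
    simp only [hPdef]
    rw [← Finset.sum_div, ← hZdef, div_self hZpos.ne']
  have hQ1 : ∑ r, EM D' r = 1 := by
    simp only [hQdef]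
    rw [← Finset.sum_div, ← hZ'def, div_self hZ'pos.ne']
  -- partition function comparisons
  have hZle : Z ≤ Real.exp (ρ / 2) * Z' := by
    rw [hZdef, hZ'def, Finset.mul_sum]
    apply Finset.sum_le_sum
    intro r _
    rw [← Real.exp_add]
    exact Real.exp_le_exp.2 (by linarith [(abs_le.1 (habs r)).2])
  have hZ'le : Z' ≤ Real.exp (ρ / 2) * Z := by
    rw [hZdef, hZ'def, Finset.mul_sum]
    apply Finset.sum_le_sum
    intro r _
    rw [← Real.exp_add]
    exact Real.exp_le_exp.2 (by linarith [(abs_le.1 (habs r)).1])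
  have hexp2 : Real.exp (ρ / 2) * Real.exp (ρ / 2) = Real.exp ρ := by
    rw [← Real.exp_add]; ring_nf
  -- pointwise likelihood-ratio bounds
  have hPQ : ∀ r, EM D r ≤ Real.exp ρ * EM D' r := by
    intro r
    rw [hPdef, hQdef, ← mul_div_assoc, div_le_div_iff₀ hZpos hZ'pos]
    calc Real.exp (ρ * S D r / (2 * Δ)) * Z'
        ≤ (Real.exp (ρ / 2) * Real.exp (ρ * S D' r / (2 * Δ)))
            * (Real.exp (ρ / 2) * Z) := by
          apply mul_le_mul _ hZ'le hZ'pos.le (by positivity)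
          rw [← Real.exp_add]
          exact Real.exp_le_exp.2 (by linarith [(abs_le.1 (habs r)).2])
      _ = (Real.exp (ρ / 2) * Real.exp (ρ / 2))
            * Real.exp (ρ * S D' r / (2 * Δ)) * Z := by ring
      _ = Real.exp ρ * Real.exp (ρ * S D' r / (2 * Δ)) * Z := by rw [hexp2]
  have hQP : ∀ r, EM D' r ≤ Real.exp ρ * EM D r := by
    intro r
    rw [hPdef, hQdef, ← mul_div_assoc, div_le_div_iff₀ hZ'pos hZpos]
    calc Real.exp (ρ * S D' r / (2 * Δ)) * Z
        ≤ (Real.exp (ρ / 2) * Real.exp (ρ * S D r / (2 * Δ)))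
            * (Real.exp (ρ / 2) * Z') := by
          apply mul_le_mul _ hZle hZpos.le (by positivity)
          rw [← Real.exp_add]
          exact Real.exp_le_exp.2 (by linarith [(abs_le.1 (habs r)).1])
      _ = (Real.exp (ρ / 2) * Real.exp (ρ / 2))
            * Real.exp (ρ * S D r / (2 * Δ)) * Z' := by ring
      _ = Real.exp ρ * Real.exp (ρ * S D r / (2 * Δ)) * Z' := by rw [hexp2]
  have hmQ : ∀ r, Real.exp (-ρ) * EM D' r ≤ EM D r := by
    intro r
    have h := mul_le_mul_of_nonneg_left (hQP r) (Real.exp_pos (-ρ)).le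
    rwa [← mul_assoc, ← Real.exp_add, neg_add_cancel, Real.exp_zero, one_mul] at h
  have hmM : Real.exp (-ρ) < Real.exp ρ := Real.exp_lt_exp.2 (by linarith)
  -- termwise convexity bound and summation
  have hterm : ∀ r, EM D r ^ α * EM D' r ^ (1 - α) ≤
      ((Real.exp ρ * EM D' r - EM D r) * Real.exp (-ρ) ^ α
        + (EM D r - Real.exp (-ρ) * EM D' r) * Real.exp ρ ^ α)
        / (Real.exp ρ - Real.exp (-ρ)) := fun r =>
    aux_term _ _ _ _ α (hQpos r) (Real.exp_pos _) hmM (hmQ r) (hPQ r) hα.le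
  have hsum : ∑ r, EM D r ^ α * EM D' r ^ (1 - α) ≤
      ((Real.exp ρ - 1) * Real.exp (-ρ) ^ α + (1 - Real.exp (-ρ)) * Real.exp ρ ^ α)
        / (Real.exp ρ - Real.exp (-ρ)) := by
    calc ∑ r, EM D r ^ α * EM D' r ^ (1 - α)
        ≤ ∑ r, ((Real.exp ρ * EM D' r - EM D r) * Real.exp (-ρ) ^ α
            + (EM D r - Real.exp (-ρ) * EM D' r) * Real.exp ρ ^ α)
            / (Real.exp ρ - Real.exp (-ρ)) :=
          Finset.sum_le_sum (fun r _ => hterm r)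
      _ = ((Real.exp ρ - 1) * Real.exp (-ρ) ^ α
            + (1 - Real.exp (-ρ)) * Real.exp ρ ^ α) / (Real.exp ρ - Real.exp (-ρ)) := by
          rw [← Finset.sum_div]
          congr 1
          rw [Finset.sum_add_distrib, ← Finset.sum_mul, ← Finset.sum_mul,
            Finset.sum_sub_distrib, Finset.sum_sub_distrib, ← Finset.mul_sum,
            ← Finset.mul_sum, hP1, hQ1]
          ring
  have hmα : Real.exp (-ρ) ^ α = Real.exp (-(ρ * α)) := by
    rw [← Real.exp_mul]; ring_nf
  have hMα : Real.exp ρ ^ α = Real.exp (ρ * α) := (Real.exp_mul ρ α).symm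
  have hratio := aux_ratio ρ α hρ hα
  rw [← hmα, ← hMα] at hratio
  have hSpos : 0 < ∑ r, EM D r ^ α * EM D' r ^ (1 - α) :=
    Finset.sum_pos (fun r _ => mul_pos (Real.rpow_pos_of_pos (hPpos r) α)
      (Real.rpow_pos_of_pos (hQpos r) (1 - α))) Finset.univ_nonempty
  have hlog : Real.log (∑ r, EM D r ^ α * EM D' r ^ (1 - α))
      ≤ (α - 1) * (ρ ^ 2 / 2 * α) :=
    (Real.log_le_iff_le_exp hSpos).2 (hsum.trans hratio)
  have h1 : (0:ℝ) < α - 1 := by linarith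
  calc (α - 1)⁻¹ * Real.log (∑ r, EM D r ^ α * EM D' r ^ (1 - α))
      ≤ (α - 1)⁻¹ * ((α - 1) * (ρ ^ 2 / 2 * α)) :=
        mul_le_mul_of_nonneg_left hlog (inv_nonneg.2 h1.le)
    _ = ρ ^ 2 / 2 * α := by field_simp
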